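/- Let γ₁, γ₂, h₁, h₂ > 0, d ≥ 2, with γ₂ − γ₁ = 1 and γ₂/γ₁ ≥ (h₁/h₂)². Then the function g_s(R) = 1 − γ₂R^d/(R²+h₂²)^{d/2} + γ₁R^d/(R²+h₁²)^{d/2} is strictly positive on (0,∞) and tends to 0 as R → ∞. -/

import Mathlib

open Real Filter Set

private lemma bernoulli_key {c p s : ℝ} (hc : 0 < c) (hp : 1 ≤ p) (hs : 0 < s) :
    c ^ p * (c + (p + 1) * s) < (c + s) ^ (p + 1) := by
  have hb : 1 + (p + 1) * (s / c) < (1 + s / c) ^ (p + 1) :=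
    one_add_mul_self_lt_rpow_one_add (by nlinarith [div_pos hs hc]) (ne_of_gt (div_pos hs hc))
      (by linarith)
  have h1 : (c + s) ^ (p + 1) = c ^ (p + 1) * (1 + s / c) ^ (p + 1) := by
    rw [← Real.mul_rpow hc.le (by positivity)]
    congr 1
    field_simp
  have h2 : c ^ (p + 1) = c ^ p * c := Real.rpow_add_one hc.ne' p
  have h3 : c ^ p * c * (1 + (p + 1) * (s / c)) = c ^ p * (c + (p + 1) * s) := by
    field_simp
  calc c ^ p * (c + (p + 1) * s) = c ^ p * c * (1 + (p + 1) * (s / c)) := h3.symm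
    _ < c ^ p * c * ((1 + s / c) ^ (p + 1)) := by
        have hpos : 0 < c ^ p * c := by positivity
        exact (mul_lt_mul_iff_right₀ hpos).mpr hb
    _ = (c + s) ^ (p + 1) := by rw [h1, h2]

private lemma key_anti {c p : ℝ} (hc : 0 < c) (hp : 1 ≤ p) :
    StrictAntiOn (fun s => (1 - c ^ p * (c + s) ^ (-p)) / s) (Ioi (0:ℝ)) := by
  have hderiv : ∀ s ∈ Ioi (0:ℝ), HasDerivAt (fun s => (1 - c ^ p * (c + s) ^ (-p)) / s)
      ((-(c ^ p * (-p * (c + s) ^ (-p - 1) * 1)) * s - (1 - c ^ p * (c + s) ^ (-p)) * 1) / s ^ 2)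
      s := by
    intro s hs
    have hs : (0:ℝ) < s := hs
    have hcs : (0:ℝ) < c + s := by linarith
    have h1 : HasDerivAt (fun s : ℝ => c + s) 1 s := (hasDerivAt_id s).const_add c
    have h2 : HasDerivAt (fun s : ℝ => (c + s) ^ (-p)) (-p * (c + s) ^ (-p - 1) * 1) s :=
      (Real.hasDerivAt_rpow_const (Or.inl hcs.ne')).comp s h1
    exact ((h2.const_mul (c ^ p)).const_sub 1).div (hasDerivAt_id s) hs.ne'
  apply strictAntiOn_of_deriv_neg (convex_Ioi 0)
  · exact fun s hs => ((hderiv s hs).continuousAt).continuousWithinAt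
  · intro s hs
    rw [interior_Ioi] at hs
    rw [(hderiv s hs).deriv]
    have hs' : (0:ℝ) < s := hs
    have hcs : (0:ℝ) < c + s := by linarith
    apply div_neg_of_neg_of_pos _ (by positivity)
    have key : p * c ^ p * (c + s) ^ (-p - 1) * s + c ^ p * (c + s) ^ (-p) < 1 := by
      have e1 : (c + s) ^ (-p) = (c + s) ^ (-p - 1) * (c + s) := by
        rw [← Real.rpow_add_one hcs.ne' (-p - 1)]; ring_nf
      have e2 : (c + s) ^ (p + 1) * (c + s) ^ (-p - 1) = 1 := by
        rw [← Real.rpow_add hcs]; norm_num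
      have hb := bernoulli_key hc hp hs'
      calc p * c ^ p * (c + s) ^ (-p - 1) * s + c ^ p * (c + s) ^ (-p)
          = c ^ p * (c + (p + 1) * s) * (c + s) ^ (-p - 1) := by rw [e1]; ring
        _ < (c + s) ^ (p + 1) * (c + s) ^ (-p - 1) := by
            exact (mul_lt_mul_iff_left₀ (by positivity)).mpr hb
        _ = 1 := e2
    nlinarith [key]

private lemma tendsto_aux {d h : ℝ} (hd : 0 < d) (hh : 0 < h) :
    Tendsto (fun R : ℝ => R ^ d / (R ^ 2 + h ^ 2) ^ (d / 2)) atTop (nhds 1) := by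
  have h1 : Tendsto (fun R : ℝ => R ^ 2 / (R ^ 2 + h ^ 2)) atTop (nhds 1) := by
    have h2 : Tendsto (fun R : ℝ => h ^ 2 / (R ^ 2 + h ^ 2)) atTop (nhds 0) := by
      apply Tendsto.div_atTop tendsto_const_nhds
      exact Filter.tendsto_atTop_add_const_right _ _ (tendsto_pow_atTop (two_ne_zero))
    have h3 : ∀ᶠ R : ℝ in atTop, R ^ 2 / (R ^ 2 + h ^ 2) = 1 - h ^ 2 / (R ^ 2 + h ^ 2) := by
      filter_upwards [eventually_gt_atTop (0:ℝ)] with R hR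
      have : (0:ℝ) < R ^ 2 + h ^ 2 := by positivity
      field_simp
      ring
    rw [Filter.tendsto_congr' h3]
    simpa using tendsto_const_nhds.sub h2
  have h4 : Tendsto (fun R : ℝ => (R ^ 2 / (R ^ 2 + h ^ 2)) ^ (d / 2)) atTop (nhds 1) := by
    have hc : ContinuousAt (fun x : ℝ => x ^ (d / 2)) 1 :=
      Real.continuousAt_rpow_const 1 (d / 2) (Or.inl one_ne_zero)
    have := hc.tendsto.comp h1
    simpa [Function.comp_def] using this
  apply h4.congr'
  filter_upwards [eventually_gt_atTop (0:ℝ)] with R hR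
  have hden : (0:ℝ) < R ^ 2 + h ^ 2 := by positivity
  rw [Real.div_rpow (by positivity) hden.le]
  congr 1
  rw [← Real.rpow_natCast R 2, ← Real.rpow_mul hR.le]
  norm_num
  congr 1
  ring

/-- In the weakly admissible case `γ₂ − γ₁ = 1` with `γ₂/γ₁ ≥ (h₁/h₂)²`,
`g_s` is strictly positive on `(0,∞)` and tends to `0` at infinity. -/
theorem gs_pos_weakly_admissible (d γ₁ γ₂ h₁ h₂ : ℝ) (hd : 2 ≤ d)
    (hγ₁ : 0 < γ₁) (hγ₂ : 0 < γ₂) (hh₁ : 0 < h₁) (hh₂ : 0 < h₂)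
    (hγ : γ₂ - γ₁ = 1) (hratio : (h₁ / h₂) ^ (2 : ℝ) ≤ γ₂ / γ₁) :
    (∀ R : ℝ, 0 < R →
      0 < 1 - γ₂ * R ^ d / (R ^ 2 + h₂ ^ 2) ^ (d / 2)
        + γ₁ * R ^ d / (R ^ 2 + h₁ ^ 2) ^ (d / 2)) ∧
    Tendsto (fun R : ℝ => 1 - γ₂ * R ^ d / (R ^ 2 + h₂ ^ 2) ^ (d / 2)
        + γ₁ * R ^ d / (R ^ 2 + h₁ ^ 2) ^ (d / 2)) atTop (nhds 0) := by
  have hd0 : 0 < d := by linarith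
  have hp : 1 ≤ d / 2 := by linarith
  have hγs : γ₁ * h₁ ^ 2 ≤ γ₂ * h₂ ^ 2 := by
    rw [Real.rpow_two, div_pow, div_le_div_iff₀ (by positivity) hγ₁] at hratio
    linarith
  constructor
  · intro R hR
    set p := d / 2 with hpdef
    set c := R ^ 2 with hcdef
    have hc : (0:ℝ) < c := by positivity
    have hRd : R ^ d = c ^ p := by
      rw [hcdef, ← Real.rpow_natCast R 2, ← Real.rpow_mul hR.le]
      norm_num [hpdef]
      ring_nf
    have hterm : ∀ h : ℝ, 0 < h → R ^ d / (c + h ^ 2) ^ p = c ^ p * (c + h ^ 2) ^ (-p) := by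
      intro h hh
      have : (0:ℝ) < c + h ^ 2 := by positivity
      rw [hRd, Real.rpow_neg this.le, div_eq_mul_inv]
    -- positivity of v s = 1 - c^p * (c+s)^(-p) for s > 0
    have hvpos : ∀ s : ℝ, 0 < s → 0 < 1 - c ^ p * (c + s) ^ (-p) := by
      intro s hs
      have hcs : (0:ℝ) < c + s := by linarith
      have h1 : c ^ p < (c + s) ^ p :=
        Real.rpow_lt_rpow hc.le (by linarith) (by linarith)
      have h2 : c ^ p * (c + s) ^ (-p) < 1 := by
        rw [Real.rpow_neg hcs.le, ← div_eq_mul_inv]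
        exact div_lt_one (by positivity) |>.mpr h1
      linarith
    have hlt : γ₁ * (1 - c ^ p * (c + h₁ ^ 2) ^ (-p)) <
        γ₂ * (1 - c ^ p * (c + h₂ ^ 2) ^ (-p)) := by
      set s₁ := h₁ ^ 2 with hs1def
      set s₂ := h₂ ^ 2 with hs2def
      have hs₁ : (0:ℝ) < s₁ := by positivity
      have hs₂ : (0:ℝ) < s₂ := by positivity
      rcases le_or_gt s₁ s₂ with hcase | hcase
      · have hmono : (c + s₂) ^ (-p) ≤ (c + s₁) ^ (-p) :=
          Real.rpow_le_rpow_of_nonpos (by linarith) (by linarith) (by linarith)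
        have hv12 : 1 - c ^ p * (c + s₁) ^ (-p) ≤ 1 - c ^ p * (c + s₂) ^ (-p) := by
          have := mul_le_mul_of_nonneg_left hmono (by positivity : (0:ℝ) ≤ c ^ p)
          linarith
        have hv2 := hvpos s₂ hs₂
        nlinarith
      · have hanti := key_anti hc hp (mem_Ioi.mpr hs₂) (mem_Ioi.mpr hs₁) hcase
        -- hanti : v s₁ / s₁ < v s₂ / s₂
        have hv1 := hvpos s₁ hs₁
        have hv2 := hvpos s₂ hs₂
        have step1 : γ₁ * (1 - c ^ p * (c + s₁) ^ (-p)) =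
            (γ₁ * s₁) * ((1 - c ^ p * (c + s₁) ^ (-p)) / s₁) := by
          field_simp
        have step2 : γ₂ * (1 - c ^ p * (c + s₂) ^ (-p)) =
            (γ₂ * s₂) * ((1 - c ^ p * (c + s₂) ^ (-p)) / s₂) := by
          field_simp
        rw [step1, step2]
        have hw1pos : 0 < (1 - c ^ p * (c + s₁) ^ (-p)) / s₁ := by positivity
        calc (γ₁ * s₁) * ((1 - c ^ p * (c + s₁) ^ (-p)) / s₁)
            ≤ (γ₂ * s₂) * ((1 - c ^ p * (c + s₁) ^ (-p)) / s₁) :=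
              mul_le_mul_of_nonneg_right hγs hw1pos.le
          _ < (γ₂ * s₂) * ((1 - c ^ p * (c + s₂) ^ (-p)) / s₂) := by
              apply (mul_lt_mul_iff_right₀ (by positivity)).mpr hanti
    have e1 := hterm h₁ hh₁
    have e2 := hterm h₂ hh₂
    rw [mul_div_assoc, mul_div_assoc, e1, e2]
    nlinarith [hlt]
  · have t1 := tendsto_aux hd0 hh₁
    have t2 := tendsto_aux hd0 hh₂
    have key : Tendsto (fun R : ℝ => 1 - γ₂ * (R ^ d / (R ^ 2 + h₂ ^ 2) ^ (d / 2))
        + γ₁ * (R ^ d / (R ^ 2 + h₁ ^ 2) ^ (d / 2))) atTop (nhds (1 - γ₂ * 1 + γ₁ * 1)) :=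
      (tendsto_const_nhds.sub (t2.const_mul γ₂)).add (t1.const_mul γ₁)
    have heq : (1:ℝ) - γ₂ * 1 + γ₁ * 1 = 0 := by linarith
    rw [heq] at key
    simpa only [mul_div_assoc] using key
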